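/- Let R₀ be the free 𝒪_k-submodule of k[P,P⁻¹,Q,Q⁻¹,T,T⁻¹,Z] generated by the monomials ϖᵈPᵖQ^qTᵃZᵉ with d,p,q,a ∈ ℤ, e ∈ ℤ_{≥0}, satisfying d = max{p+q+a, p+q-a, p+a, q-a}, and (if e=0) p ≥ 0 and q ≥ 0, and (if e=1) p ≥ 0 or q ≥ 0. Then R₀ is a subring: 1 ∈ R₀ and the product of any two such generators lies in R₀. -/

import Mathlib

/-- The valuation ring `𝒪_k = {c : k | ‖c‖ ≤ 1}` of a non-archimedean normed field. -/
def valuationSubring (k : Type*) [NormedField k] [IsUltrametricDist k] : Subring k where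
  carrier := {c | ‖c‖ ≤ 1}
  one_mem' := by simp
  zero_mem' := by simp
  neg_mem' := by simp
  mul_mem' := by
    intro a b ha hb
    simp only [Set.mem_setOf_eq] at *
    calc ‖a * b‖ = ‖a‖ * ‖b‖ := norm_mul a b
      _ ≤ 1 * 1 := mul_le_mul ha hb (norm_nonneg b) zero_le_one
      _ = 1 := one_mul 1
  add_mem' := by
    intro a b ha hb
    simp only [Set.mem_setOf_eq] at *
    exact le_trans (IsUltrametricDist.norm_add_le_max a b) (max_le ha hb)

/-- The free `𝒪_k`-submodule `R₀` of `k[P,P⁻¹,Q,Q⁻¹,T,T⁻¹,Z]` generated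
by the monomials `ϖᵈPᵖQ^qTᵃZᵉ` with `d = max{p+q+a, p+q-a, p+a, q-a}`, with `p,q ≥ 0`
if `e = 0` and (`p ≥ 0` or `q ≥ 0`) if `e = 1`, is a subring: it contains `1` and is
closed under multiplication. Here the ring is modelled as the monoid algebra on
`ℤ × ℤ × ℤ × ℕ`. -/
theorem non_sheafy_uniform_ring_of_definition_is_subring
    (k : Type*) [NontriviallyNormedField k] [IsUltrametricDist k] [CompleteSpace k]
    (ϖ : k) (hϖ0 : 0 < ‖ϖ‖) (hϖ1 : ‖ϖ‖ < 1)
    (R₀ : Submodule (valuationSubring k) (AddMonoidAlgebra k (ℤ × ℤ × ℤ × ℕ)))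
    (hR₀ : R₀ = Submodule.span (valuationSubring k)
      {x : AddMonoidAlgebra k (ℤ × ℤ × ℤ × ℕ) | ∃ (p q a : ℤ) (e : ℕ),
        (e = 0 → 0 ≤ p ∧ 0 ≤ q) ∧ (e = 1 → 0 ≤ p ∨ 0 ≤ q) ∧
        x = ϖ ^ (max (max (p + q + a) (p + q - a)) (max (p + a) (q - a))) •
          AddMonoidAlgebra.single (p, q, a, e) (1 : k)}) :
    (1 : AddMonoidAlgebra k (ℤ × ℤ × ℤ × ℕ)) ∈ R₀ ∧
    ∀ x ∈ R₀, ∀ y ∈ R₀, x * y ∈ R₀ := by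
  subst hR₀
  set S : Set (AddMonoidAlgebra k (ℤ × ℤ × ℤ × ℕ)) :=
    {x : AddMonoidAlgebra k (ℤ × ℤ × ℤ × ℕ) | ∃ (p q a : ℤ) (e : ℕ),
      (e = 0 → 0 ≤ p ∧ 0 ≤ q) ∧ (e = 1 → 0 ≤ p ∨ 0 ≤ q) ∧
      x = ϖ ^ (max (max (p + q + a) (p + q - a)) (max (p + a) (q - a))) •
        AddMonoidAlgebra.single (p, q, a, e) (1 : k)} with hS
  have key : ∀ s ∈ S, ∀ t ∈ S, s * t ∈ Submodule.span (valuationSubring k) S := by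
    rintro s ⟨p1, q1, a1, e1, h10, h11, rfl⟩ t ⟨p2, q2, a2, e2, h20, h21, rfl⟩
    set d1 := max (max (p1 + q1 + a1) (p1 + q1 - a1)) (max (p1 + a1) (q1 - a1)) with hd1
    set d2 := max (max (p2 + q2 + a2) (p2 + q2 - a2)) (max (p2 + a2) (q2 - a2)) with hd2
    set p := p1 + p2
    set q := q1 + q2
    set a := a1 + a2
    set e := e1 + e2
    set d := max (max (p + q + a) (p + q - a)) (max (p + a) (q - a)) with hd
    have hdle : d ≤ d1 + d2 := by simp only [hd, hd1, hd2, p, q, a]; omega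
    have hϖne : ϖ ≠ 0 := by
      intro h; rw [h, norm_zero] at hϖ0; exact lt_irrefl _ hϖ0
    have hnorm : ‖ϖ ^ (d1 + d2 - d)‖ ≤ 1 := by
      obtain ⟨m, hm⟩ : ∃ m : ℕ, d1 + d2 - d = (m : ℤ) :=
        ⟨(d1 + d2 - d).toNat, (Int.toNat_of_nonneg (by omega)).symm⟩
      rw [hm, zpow_natCast, norm_pow]
      exact pow_le_one₀ (norm_nonneg ϖ) hϖ1.le
    have hgen : ϖ ^ d • AddMonoidAlgebra.single (p, q, a, e) (1 : k) ∈ S := by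
      refine ⟨p, q, a, e, ?_, ?_, rfl⟩
      · intro he
        have he1 : e1 = 0 := by omega
        have he2 : e2 = 0 := by omega
        obtain ⟨hp1, hq1⟩ := h10 he1
        obtain ⟨hp2, hq2⟩ := h20 he2
        constructor <;> [exact add_nonneg hp1 hp2; exact add_nonneg hq1 hq2]
      · intro he
        rcases Nat.eq_zero_or_pos e1 with he1 | he1
        · obtain ⟨hp1, hq1⟩ := h10 he1
          have he2 : e2 = 1 := by omega
          rcases h21 he2 with hp2 | hq2
          · exact Or.inl (add_nonneg hp1 hp2)
          · exact Or.inr (add_nonneg hq1 hq2)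
        · have he1' : e1 = 1 := by omega
          obtain ⟨hp2, hq2⟩ := h20 (by omega)
          rcases h11 he1' with hp1 | hq1
          · exact Or.inl (add_nonneg hp1 hp2)
          · exact Or.inr (add_nonneg hq1 hq2)
    have heq : (ϖ ^ d1 • AddMonoidAlgebra.single (p1, q1, a1, e1) (1 : k)) *
        (ϖ ^ d2 • AddMonoidAlgebra.single (p2, q2, a2, e2) (1 : k)) =
        ϖ ^ (d1 + d2 - d) • (ϖ ^ d • AddMonoidAlgebra.single (p, q, a, e) (1 : k)) := by
      rw [smul_mul_assoc, mul_smul_comm, smul_smul, smul_smul,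
        AddMonoidAlgebra.single_mul_single, one_mul, ← zpow_add₀ hϖne, ← zpow_add₀ hϖne]
      ring_nf
      rfl
    rw [heq]
    have := Submodule.smul_mem (Submodule.span (valuationSubring k) S)
      (⟨ϖ ^ (d1 + d2 - d), hnorm⟩ : valuationSubring k)
      (Submodule.subset_span hgen)
    exact this
  constructor
  · apply Submodule.subset_span
    refine ⟨0, 0, 0, 0, fun _ => ⟨le_refl 0, le_refl 0⟩, fun h => by omega, ?_⟩
    simp [AddMonoidAlgebra.one_def]; rfl
  · intro x hx y hy
    induction hx using Submodule.span_induction with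
    | mem s hs =>
      induction hy using Submodule.span_induction with
      | mem t ht => exact key s hs t ht
      | zero => rw [mul_zero]; exact Submodule.zero_mem _
      | add u v _ _ hu hv => rw [mul_add]; exact Submodule.add_mem _ hu hv
      | smul c u _ hu => rw [mul_smul_comm]; exact Submodule.smul_mem _ c hu
    | zero => rw [zero_mul]; exact Submodule.zero_mem _
    | add u v _ _ hu hv => rw [add_mul]; exact Submodule.add_mem _ hu hv
    | smul c u _ hu => rw [smul_mul_assoc]; exact Submodule.smul_mem _ c hu
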